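/- If P ∈ GL(n, ℝ) normalizes SO(n, ℝ) (n ≥ 3), then conjugation by P preserves the standard inner product up to a positive scalar: there exists c > 0 with ⟨Px, Py⟩ = c ⟨x, y⟩ for all x, y ∈ ℝⁿ. -/

import Mathlib

open Matrix Equiv

section AuxNormSO
variable {n : ℕ}

lemma aux_permMatrix_apply' (σ : Perm (Fin n)) (i j : Fin n) :
    σ.permMatrix ℝ i j = if σ i = j then 1 else 0 := by
  simp [PEquiv.toMatrix_apply, Equiv.toPEquiv_apply, eq_comm]

lemma aux_permMatrix_orth (σ : Perm (Fin n)) : (σ.permMatrix ℝ)ᵀ * σ.permMatrix ℝ = 1 := by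
  ext a b
  rw [Matrix.mul_apply, Matrix.one_apply]
  simp only [transpose_apply, aux_permMatrix_apply']
  rw [Finset.sum_eq_single (σ⁻¹ a)]
  · by_cases h : a = b <;> simp [h, Equiv.Perm.coe_inv, Equiv.apply_symm_apply]
  · intro k _ hk
    rw [if_neg (fun h => hk (by rw [← h, Equiv.Perm.coe_inv, Equiv.symm_apply_apply])), zero_mul]
  · simp

lemma aux_permMatrix_conj_diag (σ : Perm (Fin n)) (g : Fin n → ℝ) :
    (σ.permMatrix ℝ)ᵀ * Matrix.diagonal g * σ.permMatrix ℝ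
      = Matrix.diagonal (fun a => g (σ⁻¹ a)) := by
  ext a b
  rw [Matrix.mul_assoc, Matrix.mul_apply]
  simp only [transpose_apply, aux_permMatrix_apply', Matrix.diagonal_mul]
  rw [Finset.sum_eq_single (σ⁻¹ a)]
  · by_cases h : a = b <;>
      simp [h, Matrix.diagonal_apply, Equiv.Perm.coe_inv, Equiv.apply_symm_apply, Ne.symm]
  · intro k _ hk
    rw [if_neg (fun h => hk (by rw [← h, Equiv.Perm.coe_inv, Equiv.symm_apply_apply])), zero_mul]
  · simp

lemma aux_third_index (hn : 3 ≤ n) (i k : Fin n) : ∃ j : Fin n, j ≠ i ∧ j ≠ k := by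
  by_contra h
  push_neg at h
  have hsub : (Finset.univ : Finset (Fin n)) ⊆ {i, k} := by
    intro j _
    rcases Classical.em (j = i) with h1 | h1
    · simp [h1]
    · simp [h j h1]
  have := Finset.card_le_card hsub
  simp only [Finset.card_univ, Fintype.card_fin] at this
  have h2 : ({i, k} : Finset (Fin n)).card ≤ 2 :=
    (Finset.card_insert_le _ _).trans (by simp)
  omega

end AuxNormSO

/-- **A normalizer of `SO(n,ℝ)` is a similarity of the Euclidean inner product.**
If `P ∈ GL(n,ℝ)` normalizes `SO(n,ℝ)` (`n ≥ 3`), i.e. `P⁻¹ SO(n) P = SO(n)`, then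
conjugation by `P` preserves the standard inner product up to a positive scalar:
there is `c > 0` with `⟨Px, Py⟩ = c ⟨x, y⟩` for all `x, y ∈ ℝⁿ`. -/
theorem normalizer_SO_preserves_inner {n : ℕ} (hn : 3 ≤ n)
    (P : (Matrix (Fin n) (Fin n) ℝ)ˣ)
    (hnorm : ∀ Q : Matrix (Fin n) (Fin n) ℝ,
      (Qᵀ * Q = 1 ∧ Q.det = 1) ↔
      ((((P⁻¹).val * Q * P.val)ᵀ * ((P⁻¹).val * Q * P.val) = 1) ∧
        ((P⁻¹).val * Q * P.val).det = 1)) :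
    ∃ c : ℝ, 0 < c ∧ ∀ x y : Fin n → ℝ,
      (P.val.mulVec x) ⬝ᵥ (P.val.mulVec y) = c * (x ⬝ᵥ y) := by
  have hpos : 0 < n := by omega
  have hinv2 : (P⁻¹).val * P.val = 1 := by
    rw [← Units.val_mul, inv_mul_cancel, Units.val_one]
  set M := P.valᵀ * P.val with hM
  have key : ∀ R : Matrix (Fin n) (Fin n) ℝ, Rᵀ * R = 1 → R.det = 1 →
      Rᵀ * M * R = M := by
    intro R h1 h2
    have h3 : (P⁻¹).val * (P.val * R * (P⁻¹).val) * P.val = R := by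
      calc (P⁻¹).val * (P.val * R * (P⁻¹).val) * P.val
          = ((P⁻¹).val * P.val) * R * ((P⁻¹).val * P.val) := by
            simp only [Matrix.mul_assoc]
        _ = R := by rw [hinv2, Matrix.one_mul, Matrix.mul_one]
    have h4 := (hnorm (P.val * R * (P⁻¹).val)).mpr (by rw [h3]; exact ⟨h1, h2⟩)
    have h5 := congrArg (fun X => P.valᵀ * X * P.val) h4.1
    simp only [Matrix.transpose_mul, Matrix.mul_one, Matrix.mul_assoc] at h5
    have ht1 : P.valᵀ * (P⁻¹).valᵀ = 1 := by
      rw [← Matrix.transpose_mul, hinv2, Matrix.transpose_one]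
    rw [hinv2, Matrix.mul_one, ← Matrix.mul_assoc, ht1, Matrix.one_mul] at h5
    rw [hM, Matrix.mul_assoc, Matrix.mul_assoc]
    exact h5
  -- step 1: off-diagonal entries of M vanish
  have offdiag : ∀ i k : Fin n, i ≠ k → M i k = 0 := by
    intro i k hik
    obtain ⟨j, hji, hjk⟩ := aux_third_index hn i k
    set f : Fin n → ℝ := fun l => if l = i ∨ l = j then -1 else 1 with hf
    have hsq : ∀ l, f l * f l = 1 := by
      intro l; by_cases h : l = i ∨ l = j <;> simp [hf, h]
    have horth : (Matrix.diagonal f)ᵀ * Matrix.diagonal f = 1 := by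
      rw [Matrix.diagonal_transpose, Matrix.diagonal_mul_diagonal]
      have : (fun l => f l * f l) = fun _ => (1:ℝ) := funext hsq
      rw [this]
      exact Matrix.diagonal_one
    have hdet : (Matrix.diagonal f).det = 1 := by
      rw [Matrix.det_diagonal]
      rw [← Finset.mul_prod_erase _ _ (Finset.mem_univ i),
          ← Finset.mul_prod_erase _ _ (Finset.mem_erase.mpr ⟨hji, Finset.mem_univ j⟩)]
      have h1 : f i = -1 := by simp [hf]
      have h2 : f j = -1 := by simp [hf]
      have h3 : ∀ l ∈ (Finset.univ.erase i).erase j, f l = 1 := by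
        intro l hl
        simp only [Finset.mem_erase] at hl
        simp [hf, hl.1, hl.2.1]
      rw [Finset.prod_congr rfl h3, h1, h2]
      simp
    have hc := key (Matrix.diagonal f) horth hdet
    rw [Matrix.diagonal_transpose] at hc
    have he := congrFun (congrFun hc i) k
    rw [Matrix.mul_diagonal, Matrix.diagonal_mul] at he
    have h1 : f i = -1 := by simp [hf]
    have h2 : f k = 1 := by
      have : ¬(k = i ∨ k = j) := by
        rintro (h | h)
        · exact hik h.symm
        · exact hjk (h.symm)
      simp [hf, this]
    rw [h1, h2] at he
    linarith
  -- step 2: diagonal entries are all equal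
  set g : Fin n → ℝ := fun i => M i i with hg
  have hMdiag : M = Matrix.diagonal g := by
    ext a b
    by_cases h : a = b
    · subst h; simp [Matrix.diagonal_apply, hg]
    · rw [Matrix.diagonal_apply_ne _ h]
      exact offdiag a b h
  have diageq : ∀ i j : Fin n, g i = g j := by
    intro i j
    by_cases hij : i = j
    · rw [hij]
    · obtain ⟨k, hki, hkj⟩ := aux_third_index hn i j
      set σ : Perm (Fin n) := Equiv.swap i j * Equiv.swap j k with hσ
      have hsign : (Equiv.Perm.sign σ : ℤ) = 1 := by
        rw [hσ, Equiv.Perm.sign_mul, Equiv.Perm.sign_swap hij,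
          Equiv.Perm.sign_swap (Ne.symm hkj)]
        simp
      have hdet : (σ.permMatrix ℝ).det = 1 := by
        rw [Matrix.det_permutation]
        rw [show Equiv.Perm.sign σ = 1 from by
          cases Int.units_eq_one_or (Equiv.Perm.sign σ) with
          | inl h => exact h
          | inr h => rw [h] at hsign; norm_num at hsign]
        simp
      have hc := key (σ.permMatrix ℝ) (aux_permMatrix_orth σ) hdet
      rw [hMdiag, aux_permMatrix_conj_diag] at hc
      have := congrFun (congrFun hc j) j
      simp only [Matrix.diagonal_apply_eq] at this
      have hσi : σ i = j := by
        rw [hσ]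
        simp only [Equiv.Perm.mul_apply]
        rw [Equiv.swap_apply_of_ne_of_ne hij (Ne.symm hki),
          Equiv.swap_apply_left]
      have hσinv : σ⁻¹ j = i := by rw [← hσi, Equiv.Perm.coe_inv, Equiv.symm_apply_apply]
      rw [hσinv] at this
      exact this
  -- conclude M = c • 1
  set i0 : Fin n := ⟨0, hpos⟩
  set c : ℝ := g i0 with hc
  have hMc : M = c • (1 : Matrix (Fin n) (Fin n) ℝ) := by
    rw [hMdiag]
    ext a b
    by_cases h : a = b
    · subst h
      simp [Matrix.diagonal_apply_eq, Matrix.one_apply, diageq a i0, hc]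
    · simp [Matrix.diagonal_apply_ne _ h, Matrix.one_apply_ne h]
  -- c ≥ 0
  have hcnonneg : 0 ≤ c := by
    have : c = ∑ k, P.val k i0 * P.val k i0 := by
      rw [hc, hg]
      simp only [hM, Matrix.mul_apply, Matrix.transpose_apply]
    rw [this]
    exact Finset.sum_nonneg fun k _ => mul_self_nonneg _
  -- c ≠ 0
  have hcne : c ≠ 0 := by
    intro h0
    have hdetM : M.det = P.val.det ^ 2 := by
      rw [hM, Matrix.det_mul, Matrix.det_transpose, sq]
    have hdet0 : M.det = 0 := by
      rw [hMc, h0, zero_smul]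
      exact @Matrix.det_zero _ _ _ _ _ ⟨i0⟩
    have : P.val.det ≠ 0 := by
      have := P.isUnit
      rw [Matrix.isUnit_iff_isUnit_det] at this
      exact this.ne_zero
    rw [hdetM] at hdet0
    exact this (pow_eq_zero_iff (by norm_num) |>.mp hdet0)
  refine ⟨c, lt_of_le_of_ne hcnonneg (Ne.symm hcne), fun x y => ?_⟩
  rw [Matrix.dotProduct_mulVec, Matrix.vecMul_mulVec, ← hM, hMc]
  have hvm : x ᵥ* (c • (1 : Matrix (Fin n) (Fin n) ℝ)) = c • x := by
    ext a
    simp [Matrix.vecMul, dotProduct, Matrix.one_apply, mul_comm]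
  rw [hvm, smul_dotProduct, smul_eq_mul]
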